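/- Work in dimension d = 2. For y ∈ [0,1], let μ_y be the pushforward of the uniform distribution on [0,1] under the map x ↦ (x, y), i.e., the uniform (arc-length) probability measure on the horizontal segment [0,1] × {y} of the unit square, and let Q be the uniform probability measure (normalized Lebesgue measure) on the unit square [0,1]². Then the curve depth of the segment at height y satisfies ∫ D(s | Q, μ_y) dμ_y(s) = min(y, 1−y) = 1/2 − |y − 1/2|. (Parallel-segments-on-a-rectangle example of Section 5.1 of the paper; here Q = Q_P is the averaged measure of the model in which a horizontal segment 𝒞_Y at a uniformly distributed random height Y ∼ Unif[0,1] is observed.) -/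

import Mathlib

open MeasureTheory Set Filter
open scoped ENNReal RealInnerProductSpace

noncomputable section

abbrev Euc (d : ℕ) := EuclideanSpace ℝ (Fin d)

def halfSpace {d : ℕ} (u x : Euc d) : Set (Euc d) := {y | ⟪x, u⟫ ≤ ⟪y, u⟫}

/-- Point curve depth `D(x | Q, μ)`. -/
def pointDepth {d : ℕ} (Q μ : Measure (Euc d)) (x : Euc d) : ℝ≥0∞ :=
  ⨅ (u : Euc d) (_ : ‖u‖ = 1), Q (halfSpace u x) / μ (halfSpace u x)

/-- Curve depth. -/
def curveDepth {d : ℕ} (Q μ : Measure (Euc d)) : ℝ≥0∞ :=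
  ∫⁻ x, pointDepth Q μ x ∂μ

/-- The arc-length (uniform) probability measure on the horizontal segment
`[0,1] × {y}` of the plane. -/
def segMeasure (y : ℝ) : Measure (Euc 2) :=
  (volume.restrict (Set.Icc (0:ℝ) 1)).map
    (fun x => (WithLp.equiv 2 (Fin 2 → ℝ)).symm ![x, y])

/-- The uniform probability measure on the unit square `[0,1]²`. -/
def squareMeasure : Measure (Euc 2) :=
  volume.restrict {p : Euc 2 | p 0 ∈ Set.Icc (0:ℝ) 1 ∧ p 1 ∈ Set.Icc (0:ℝ) 1}

namespace ParSegAux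

lemma inner2 (p u : Euc 2) : ⟪p, u⟫ = p 0 * u 0 + p 1 * u 1 := by
  simp [PiLp.inner_apply, Fin.sum_univ_two, mul_comm]

def emb (y : ℝ) : ℝ → Euc 2 := fun x => (WithLp.equiv 2 (Fin 2 → ℝ)).symm ![x, y]

@[simp] lemma emb_zero (y x : ℝ) : emb y x 0 = x := by
  simp [emb, WithLp.equiv_symm_apply]

@[simp] lemma emb_one (y x : ℝ) : emb y x 1 = y := by
  simp [emb, WithLp.equiv_symm_apply]

lemma measurable_emb (y : ℝ) : Measurable (emb y) := by
  refine (WithLp.measurable_toLp 2 (Fin 2 → ℝ)).comp (measurable_pi_lambda _ ?_)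
  intro i
  fin_cases i <;> simp <;> fun_prop

lemma measurableSet_halfSpace (u p : Euc 2) : MeasurableSet (halfSpace u p) := by
  have h : Measurable fun q : Euc 2 => ⟪q, u⟫ :=
    (Continuous.inner continuous_id continuous_const).measurable
  exact measurableSet_le measurable_const h

lemma measurable_rect {A B : Set ℝ} (hA : MeasurableSet A) (hB : MeasurableSet B) :
    MeasurableSet {p : Euc 2 | p 0 ∈ A ∧ p 1 ∈ B} := by
  exact (((measurable_pi_apply 0).comp (WithLp.measurable_ofLp 2 (Fin 2 → ℝ))) hA).inter
    (((measurable_pi_apply 1).comp (WithLp.measurable_ofLp 2 (Fin 2 → ℝ))) hB)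

lemma volume_rect {A B : Set ℝ} (hA : MeasurableSet A) (hB : MeasurableSet B) :
    volume {p : Euc 2 | p 0 ∈ A ∧ p 1 ∈ B} = volume A * volume B := by
  have h := EuclideanSpace.volume_preserving_symm_measurableEquiv_toLp (Fin 2)
  have hs : {p : Euc 2 | p 0 ∈ A ∧ p 1 ∈ B}
      = (MeasurableEquiv.toLp 2 (Fin 2 → ℝ)).symm ⁻¹' (Set.univ.pi ![A, B]) := by
    ext p
    simp [Set.mem_pi, Fin.forall_fin_two, MeasurableEquiv.coe_toLp_symm]
  rw [hs, h.measure_preimage]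
  · rw [volume_pi_pi]
    simp [Fin.prod_univ_two]
  · exact (MeasurableSet.univ_pi (by intro i; fin_cases i <;> simpa)).nullMeasurableSet

lemma square_apply {A B : Set ℝ} (hA : MeasurableSet A) (hB : MeasurableSet B) :
    squareMeasure {p : Euc 2 | p 0 ∈ A ∧ p 1 ∈ B}
      = volume (A ∩ Icc 0 1) * volume (B ∩ Icc 0 1) := by
  rw [squareMeasure, Measure.restrict_apply (measurable_rect hA hB)]
  have : {p : Euc 2 | p 0 ∈ A ∧ p 1 ∈ B} ∩ {p : Euc 2 | p 0 ∈ Icc (0:ℝ) 1 ∧ p 1 ∈ Icc (0:ℝ) 1}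
      = {p : Euc 2 | p 0 ∈ A ∩ Icc 0 1 ∧ p 1 ∈ B ∩ Icc 0 1} := by
    ext p; simp; tauto
  rw [this, volume_rect (hA.inter measurableSet_Icc) (hB.inter measurableSet_Icc)]

lemma seg_apply (y : ℝ) {S : Set (Euc 2)} (hS : MeasurableSet S) :
    segMeasure y S = volume (emb y ⁻¹' S ∩ Icc 0 1) := by
  have : segMeasure y = (volume.restrict (Set.Icc (0:ℝ) 1)).map (emb y) := rfl
  rw [this, Measure.map_apply (measurable_emb y) hS,
    Measure.restrict_apply ((measurable_emb y) hS)]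

end ParSegAux

namespace ParSegAux

lemma ratio_ge {Qv : ℝ≥0∞} {a b : ℝ} (hb : 0 < b)
    (hQ : ENNReal.ofReal a * ENNReal.ofReal b ≤ Qv) :
    ENNReal.ofReal a ≤ Qv / ENNReal.ofReal b := by
  rw [ENNReal.le_div_iff_mul_le (Or.inl (ENNReal.ofReal_pos.mpr hb).ne')
    (Or.inl ENNReal.ofReal_ne_top)]
  exact hQ

lemma Ici_inter {y : ℝ} (hy : 0 ≤ y) : Ici y ∩ Icc 0 1 = Icc y 1 := by
  ext x
  simp only [mem_inter_iff, mem_Ici, mem_Icc]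
  exact ⟨fun ⟨h1, _, h3⟩ => ⟨h1, h3⟩, fun ⟨h1, h3⟩ => ⟨h1, hy.trans h1, h3⟩⟩

lemma Iic_inter {y : ℝ} (hy : y ≤ 1) : Iic y ∩ Icc 0 1 = Icc 0 y := by
  ext x
  simp only [mem_inter_iff, mem_Iic, mem_Icc]
  exact ⟨fun ⟨h1, h2, _⟩ => ⟨h2, h1⟩, fun ⟨h2, h1⟩ => ⟨h1, h2, h1.trans hy⟩⟩

lemma square_rect_le {u p : Euc 2} {a b c d : ℝ}
    (ha : 0 ≤ a) (hb : b ≤ 1) (hc : 0 ≤ c) (hd : d ≤ 1)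
    (hsub : {q : Euc 2 | q 0 ∈ Icc a b ∧ q 1 ∈ Icc c d} ⊆ halfSpace u p) :
    ENNReal.ofReal (b - a) * ENNReal.ofReal (d - c) ≤ squareMeasure (halfSpace u p) := by
  have h1 : Icc a b ∩ Icc (0:ℝ) 1 = Icc a b :=
    inter_eq_left.mpr (Icc_subset_Icc ha hb)
  have h2 : Icc c d ∩ Icc (0:ℝ) 1 = Icc c d :=
    inter_eq_left.mpr (Icc_subset_Icc hc hd)
  have := square_apply (A := Icc a b) (B := Icc c d) measurableSet_Icc measurableSet_Icc
  rw [h1, h2, Real.volume_Icc, Real.volume_Icc] at this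
  rw [← this]
  exact measure_mono hsub

lemma pointDepth_eq {y s : ℝ} (hy0 : 0 ≤ y) (hy1 : y ≤ 1) (hs0 : 0 < s) (hs1 : s < 1)
    {p : Euc 2} (hp0 : p 0 = s) (hp1 : p 1 = y) :
    pointDepth squareMeasure (segMeasure y) p = ENNReal.ofReal (min y (1 - y)) := by
  have hmem : ∀ (u : Euc 2) (q : Euc 2),
      q ∈ halfSpace u p ↔ s * u 0 + y * u 1 ≤ q 0 * u 0 + q 1 * u 1 := by
    intro u q
    simp [halfSpace, inner2, hp0, hp1]
  apply le_antisymm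
  · -- upper bound: vertical directions
    have hup : pointDepth squareMeasure (segMeasure y) p ≤ ENNReal.ofReal (1 - y) := by
      have hu : ‖(EuclideanSpace.single (1 : Fin 2) (1:ℝ))‖ = 1 := by
        simp [EuclideanSpace.norm_single]
      refine iInf_le_of_le (EuclideanSpace.single 1 1) (iInf_le_of_le hu (le_of_eq ?_))
      have hset : halfSpace (EuclideanSpace.single (1 : Fin 2) (1:ℝ)) p
          = {q : Euc 2 | q 0 ∈ univ ∧ q 1 ∈ Ici y} := by
        ext q
        simp [hmem, EuclideanSpace.single_apply]
      rw [hset, square_apply MeasurableSet.univ measurableSet_Ici, univ_inter,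
        Ici_inter hy0, Real.volume_Icc, Real.volume_Icc]
      have hμ : segMeasure y {q : Euc 2 | q 0 ∈ univ ∧ q 1 ∈ Ici y} = 1 := by
        rw [seg_apply y (measurable_rect MeasurableSet.univ measurableSet_Ici)]
        have : emb y ⁻¹' {q : Euc 2 | q 0 ∈ univ ∧ q 1 ∈ Ici y} = univ := by
          ext x; simp
        rw [this, univ_inter, Real.volume_Icc]
        norm_num
      rw [hμ, div_one]
      norm_num
    have hdown : pointDepth squareMeasure (segMeasure y) p ≤ ENNReal.ofReal y := by
      have hu : ‖(EuclideanSpace.single (1 : Fin 2) (-1:ℝ))‖ = 1 := by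
        simp [EuclideanSpace.norm_single]
      refine iInf_le_of_le (EuclideanSpace.single 1 (-1)) (iInf_le_of_le hu (le_of_eq ?_))
      have hset : halfSpace (EuclideanSpace.single (1 : Fin 2) (-1:ℝ)) p
          = {q : Euc 2 | q 0 ∈ univ ∧ q 1 ∈ Iic y} := by
        ext q
        simp [hmem, EuclideanSpace.single_apply]
      rw [hset, square_apply MeasurableSet.univ measurableSet_Iic, univ_inter,
        Iic_inter hy1, Real.volume_Icc, Real.volume_Icc]
      have hμ : segMeasure y {q : Euc 2 | q 0 ∈ univ ∧ q 1 ∈ Iic y} = 1 := by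
        rw [seg_apply y (measurable_rect MeasurableSet.univ measurableSet_Iic)]
        have : emb y ⁻¹' {q : Euc 2 | q 0 ∈ univ ∧ q 1 ∈ Iic y} = univ := by
          ext x; simp
        rw [this, univ_inter, Real.volume_Icc]
        norm_num
      rw [hμ, div_one]
      norm_num
    calc pointDepth squareMeasure (segMeasure y) p
        ≤ min (ENNReal.ofReal y) (ENNReal.ofReal (1 - y)) := le_min hdown hup
      _ = ENNReal.ofReal (min y (1 - y)) :=
        (Monotone.map_min (fun _ _ h => ENNReal.ofReal_le_ofReal h)).symm
  · -- lower bound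
    refine le_iInf fun u => le_iInf fun hu => ?_
    rcases lt_trichotomy (u 0) 0 with h0 | h0 | h0
    · -- u0 < 0 : μ = ofReal s
      have hseg : segMeasure y (halfSpace u p) = ENNReal.ofReal s := by
        rw [seg_apply y (measurableSet_halfSpace u p)]
        have hpre : emb y ⁻¹' halfSpace u p = Iic s := by
          ext x
          simp only [mem_preimage, hmem, emb_zero, emb_one, mem_Iic, add_le_add_iff_right]
          constructor
          · intro h; nlinarith
          · intro h; nlinarith
        rw [hpre, Iic_inter hs1.le, Real.volume_Icc, sub_zero]
      rw [hseg]
      rcases le_or_gt 0 (u 1) with h1 | h1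
      · -- rect [0,s] × [y,1]
        have hsub : {q : Euc 2 | q 0 ∈ Icc 0 s ∧ q 1 ∈ Icc y 1} ⊆ halfSpace u p := by
          rintro q ⟨⟨hq0a, hq0b⟩, hq1a, hq1b⟩
          rw [hmem]
          have e1 : s * u 0 ≤ q 0 * u 0 := by nlinarith
          have e2 : y * u 1 ≤ q 1 * u 1 := by nlinarith
          linarith
        apply ratio_ge hs0
        calc ENNReal.ofReal (min y (1 - y)) * ENNReal.ofReal s
            ≤ ENNReal.ofReal (1 - y) * ENNReal.ofReal s := by
              gcongr; exact min_le_right _ _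
          _ = ENNReal.ofReal (s - 0) * ENNReal.ofReal (1 - y) := by
              rw [sub_zero, mul_comm]
          _ ≤ squareMeasure (halfSpace u p) :=
              square_rect_le le_rfl hs1.le hy0 le_rfl hsub
      · -- rect [0,s] × [0,y]
        have hsub : {q : Euc 2 | q 0 ∈ Icc 0 s ∧ q 1 ∈ Icc 0 y} ⊆ halfSpace u p := by
          rintro q ⟨⟨hq0a, hq0b⟩, hq1a, hq1b⟩
          rw [hmem]
          have e1 : s * u 0 ≤ q 0 * u 0 := by nlinarith
          have e2 : y * u 1 ≤ q 1 * u 1 := by nlinarith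
          linarith
        apply ratio_ge hs0
        calc ENNReal.ofReal (min y (1 - y)) * ENNReal.ofReal s
            ≤ ENNReal.ofReal y * ENNReal.ofReal s := by
              gcongr; exact min_le_left _ _
          _ = ENNReal.ofReal (s - 0) * ENNReal.ofReal (y - 0) := by
              rw [sub_zero, sub_zero, mul_comm]
          _ ≤ squareMeasure (halfSpace u p) :=
              square_rect_le le_rfl hs1.le le_rfl hy1 hsub
    · -- u0 = 0 : vertical
      have h1ne : u 1 ≠ 0 := by
        intro h1
        have : u = 0 := by
          ext i
          fin_cases i
          · exact h0
          · exact h1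
        rw [this] at hu
        simp at hu
      rcases h1ne.lt_or_gt with h1 | h1
      · -- u1 < 0 : halfspace {q1 ≤ y}
        have hset : halfSpace u p = {q : Euc 2 | q 0 ∈ univ ∧ q 1 ∈ Iic y} := by
          ext q
          simp only [hmem, h0, mul_zero, zero_add, mem_setOf_eq, mem_univ, true_and, mem_Iic]
          constructor
          · intro h; nlinarith
          · intro h; nlinarith
        rw [hset, square_apply MeasurableSet.univ measurableSet_Iic, univ_inter,
          Iic_inter hy1, Real.volume_Icc, Real.volume_Icc]
        have hμ : segMeasure y {q : Euc 2 | q 0 ∈ univ ∧ q 1 ∈ Iic y} = 1 := by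
          rw [seg_apply y (measurable_rect MeasurableSet.univ measurableSet_Iic)]
          have : emb y ⁻¹' {q : Euc 2 | q 0 ∈ univ ∧ q 1 ∈ Iic y} = univ := by
            ext x; simp
          rw [this, univ_inter, Real.volume_Icc]; norm_num
        rw [hμ, div_one]
        have : ENNReal.ofReal (1 - 0) * ENNReal.ofReal (y - 0) = ENNReal.ofReal y := by
          norm_num
        rw [this]
        exact ENNReal.ofReal_le_ofReal (min_le_left _ _)
      · -- u1 > 0 : halfspace {y ≤ q1}
        have hset : halfSpace u p = {q : Euc 2 | q 0 ∈ univ ∧ q 1 ∈ Ici y} := by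
          ext q
          simp only [hmem, h0, mul_zero, zero_add, mem_setOf_eq, mem_univ, true_and, mem_Ici]
          constructor
          · intro h; nlinarith
          · intro h; nlinarith
        rw [hset, square_apply MeasurableSet.univ measurableSet_Ici, univ_inter,
          Ici_inter hy0, Real.volume_Icc, Real.volume_Icc]
        have hμ : segMeasure y {q : Euc 2 | q 0 ∈ univ ∧ q 1 ∈ Ici y} = 1 := by
          rw [seg_apply y (measurable_rect MeasurableSet.univ measurableSet_Ici)]
          have : emb y ⁻¹' {q : Euc 2 | q 0 ∈ univ ∧ q 1 ∈ Ici y} = univ := by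
            ext x; simp
          rw [this, univ_inter, Real.volume_Icc]; norm_num
        rw [hμ, div_one]
        have : ENNReal.ofReal (1 - 0) * ENNReal.ofReal (1 - y) = ENNReal.ofReal (1 - y) := by
          norm_num
        rw [this]
        exact ENNReal.ofReal_le_ofReal (min_le_right _ _)
    · -- u0 > 0 : μ = ofReal (1 - s)
      have hseg : segMeasure y (halfSpace u p) = ENNReal.ofReal (1 - s) := by
        rw [seg_apply y (measurableSet_halfSpace u p)]
        have hpre : emb y ⁻¹' halfSpace u p = Ici s := by
          ext x
          simp only [mem_preimage, hmem, emb_zero, emb_one, mem_Ici, add_le_add_iff_right]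
          constructor
          · intro h; nlinarith
          · intro h; nlinarith
        rw [hpre, Ici_inter hs0.le, Real.volume_Icc]
      rw [hseg]
      rcases le_or_gt 0 (u 1) with h1 | h1
      · -- rect [s,1] × [y,1]
        have hsub : {q : Euc 2 | q 0 ∈ Icc s 1 ∧ q 1 ∈ Icc y 1} ⊆ halfSpace u p := by
          rintro q ⟨⟨hq0a, hq0b⟩, hq1a, hq1b⟩
          rw [hmem]
          have e1 : s * u 0 ≤ q 0 * u 0 := by nlinarith
          have e2 : y * u 1 ≤ q 1 * u 1 := by nlinarith
          linarith
        apply ratio_ge (by linarith)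
        calc ENNReal.ofReal (min y (1 - y)) * ENNReal.ofReal (1 - s)
            ≤ ENNReal.ofReal (1 - y) * ENNReal.ofReal (1 - s) := by
              gcongr; exact min_le_right _ _
          _ = ENNReal.ofReal (1 - s) * ENNReal.ofReal (1 - y) := mul_comm _ _
          _ ≤ squareMeasure (halfSpace u p) :=
              square_rect_le hs0.le le_rfl hy0 le_rfl hsub
      · -- rect [s,1] × [0,y]
        have hsub : {q : Euc 2 | q 0 ∈ Icc s 1 ∧ q 1 ∈ Icc 0 y} ⊆ halfSpace u p := by
          rintro q ⟨⟨hq0a, hq0b⟩, hq1a, hq1b⟩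
          rw [hmem]
          have e1 : s * u 0 ≤ q 0 * u 0 := by nlinarith
          have e2 : y * u 1 ≤ q 1 * u 1 := by nlinarith
          linarith
        apply ratio_ge (by linarith)
        calc ENNReal.ofReal (min y (1 - y)) * ENNReal.ofReal (1 - s)
            ≤ ENNReal.ofReal y * ENNReal.ofReal (1 - s) := by
              gcongr; exact min_le_left _ _
          _ = ENNReal.ofReal (1 - s) * ENNReal.ofReal (y - 0) := by
              rw [sub_zero, mul_comm]
          _ ≤ squareMeasure (halfSpace u p) :=
              square_rect_le hs0.le le_rfl le_rfl hy1 hsub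

end ParSegAux

open ParSegAux

/-- Parallel-segments-on-a-rectangle example of Section 5.1 of the paper: the curve
depth of the horizontal segment at height `y ∈ [0,1]`, with respect to the uniform
measure on the unit square (the averaged measure `Q_P` of the model `𝒞_Y`,
`Y ~ Unif[0,1]`), equals `min(y, 1−y) = 1/2 − |y − 1/2|`. -/
theorem parallel_segments_depth (y : ℝ) (hy : y ∈ Set.Icc (0:ℝ) 1) :
    curveDepth squareMeasure (segMeasure y) = ENNReal.ofReal (min y (1 - y)) ∧
    curveDepth squareMeasure (segMeasure y) = ENNReal.ofReal (1 / 2 - |y - 1 / 2|) := by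
  obtain ⟨hy0, hy1⟩ := hy
  have hseg_univ : segMeasure y univ = 1 := by
    rw [seg_apply y MeasurableSet.univ, preimage_univ, univ_inter, Real.volume_Icc]
    norm_num
  have hmain : curveDepth squareMeasure (segMeasure y) = ENNReal.ofReal (min y (1 - y)) := by
    set G : Set (Euc 2) := {q : Euc 2 | q 0 ∈ Ioo (0:ℝ) 1 ∧ q 1 ∈ ({y} : Set ℝ)} with hGdef
    have hGm : MeasurableSet G := measurable_rect measurableSet_Ioo (measurableSet_singleton y)
    have hnull : segMeasure y Gᶜ = 0 := by
      rw [seg_apply y hGm.compl]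
      have hpre : emb y ⁻¹' Gᶜ = (Ioo (0:ℝ) 1)ᶜ := by
        ext x
        simp [hGdef]
      rw [hpre]
      have : (Ioo (0:ℝ) 1)ᶜ ∩ Icc 0 1 = Icc (0:ℝ) 1 \ Ioo 0 1 := by
        rw [diff_eq, inter_comm]
      rw [this, Icc_diff_Ioo_same (by norm_num)]
      exact (Set.Finite.insert 0 (Set.finite_singleton 1)).measure_zero _
    have hae : ∀ᵐ q ∂(segMeasure y),
        pointDepth squareMeasure (segMeasure y) q = ENNReal.ofReal (min y (1 - y)) := by
      rw [ae_iff]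
      refine measure_mono_null ?_ hnull
      intro q hq hqG
      exact hq (pointDepth_eq hy0 hy1 hqG.1.1 hqG.1.2 rfl (mem_singleton_iff.mp hqG.2))
    rw [curveDepth, lintegral_congr_ae hae, lintegral_const, hseg_univ, mul_one]
  refine ⟨hmain, hmain.trans ?_⟩
  congr 1
  rcases le_total y (1/2) with h | h
  · rw [abs_of_nonpos (by linarith), min_eq_left (by linarith)]; ring
  · rw [abs_of_nonneg (by linarith), min_eq_right (by linarith)]; ring
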